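/- If a family of classes satisfies Φ_r = Σ_{i=0}^{(n-r)/2} binom(r+2i, r)·s_{r+2i} for all r with 0 ≤ r ≤ n and n−r even (in an abelian group), then s_r = Σ_{i=0}^{(n-r)/2} binom(r+2i, r)·E_{2i}·Φ_{r+2i} for all such r, where E_n are the Euler numbers. -/

import Mathlib

open Finset

lemma tri_swap {M : Type*} [AddCommMonoid M] (m : ℕ) (f : ℕ → ℕ → M) :
    ∑ i ∈ range (m + 1), ∑ j ∈ range (m - i + 1), f i j
      = ∑ k ∈ range (m + 1), ∑ i ∈ range (k + 1), f i (k - i) := by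
  rw [Finset.sum_sigma', Finset.sum_sigma']
  apply Finset.sum_nbij' (fun p => ⟨p.1 + p.2, p.1⟩) (fun p => ⟨p.2, p.1 - p.2⟩)
  · rintro ⟨i, j⟩ h
    simp only [Finset.mem_sigma, Finset.mem_range] at h ⊢
    omega
  · rintro ⟨k, i⟩ h
    simp only [Finset.mem_sigma, Finset.mem_range] at h ⊢
    omega
  · rintro ⟨i, j⟩ h; simp
  · rintro ⟨k, i⟩ h
    simp only [Finset.mem_sigma, Finset.mem_range] at h
    simp [Nat.add_sub_cancel' (by omega : i ≤ k)]
  · rintro ⟨i, j⟩ h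
    simp only [Finset.mem_sigma, Finset.mem_range] at h
    simp

/-- If `Φ_r = Σ_{i=0}^{(n-r)/2} binom(r+2i,r)·s_{r+2i}` for all `0 ≤ r ≤ n`
with `n−r` even, then `s_r = Σ_{i=0}^{(n-r)/2} binom(r+2i,r)·E_{2i}·Φ_{r+2i}` for all such `r`. -/
theorem sieve_inversion_skew (n : ℕ) (V : Type*) [AddCommGroup V] [Module ℚ V]
    (E : ℕ → ℚ)
    (hE : ∀ m, ∑ k ∈ Finset.range (m + 1), ((2 * m).choose (2 * k) : ℚ) * E (2 * k)
      = if m = 0 then 1 else 0)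
    (Φ s : ℕ → V)
    (hΦ : ∀ r, r ≤ n → Even (n - r) →
      Φ r = ∑ i ∈ Finset.range ((n - r) / 2 + 1), ((r + 2 * i).choose r : ℚ) • s (r + 2 * i)) :
    ∀ r, r ≤ n → Even (n - r) →
      s r = ∑ i ∈ Finset.range ((n - r) / 2 + 1),
        (((r + 2 * i).choose r : ℚ) * E (2 * i)) • Φ (r + 2 * i) := by
  intro r hr he
  obtain ⟨m, hm⟩ := he
  have hm2 : n - r = 2 * m := by omega
  have hrm : r + 2 * m = n := by omega
  rw [hm2, Nat.mul_div_cancel_left _ two_pos]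
  have key : ∀ i ∈ range (m + 1),
      (((r + 2 * i).choose r : ℚ) * E (2 * i)) • Φ (r + 2 * i)
        = ∑ j ∈ range (m - i + 1),
            (((r + 2 * i).choose r : ℚ) * E (2 * i) * ((r + 2 * i + 2 * j).choose (r + 2 * i))) •
              s (r + 2 * i + 2 * j) := by
    intro i hi
    simp only [mem_range] at hi
    have hi' : i ≤ m := by omega
    have h1 : r + 2 * i ≤ n := by omega
    have h2 : Even (n - (r + 2 * i)) := ⟨m - i, by omega⟩
    have h3 : (n - (r + 2 * i)) / 2 = m - i := by omega
    rw [hΦ _ h1 h2, h3, Finset.smul_sum]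
    refine Finset.sum_congr rfl fun j hj => ?_
    rw [smul_smul]
  rw [Finset.sum_congr rfl key, tri_swap]
  have coll : ∀ k ∈ range (m + 1),
      (∑ i ∈ range (k + 1),
        (((r + 2 * i).choose r : ℚ) * E (2 * i) *
          ((r + 2 * i + 2 * (k - i)).choose (r + 2 * i))) • s (r + 2 * i + 2 * (k - i)))
      = if k = 0 then s r else 0 := by
    intro k hk
    have hsum : ∀ i ∈ range (k + 1), r + 2 * i + 2 * (k - i) = r + 2 * k := by
      intro i hi; simp only [mem_range] at hi; omega
    have : (∑ i ∈ range (k + 1),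
        (((r + 2 * i).choose r : ℚ) * E (2 * i) *
          ((r + 2 * i + 2 * (k - i)).choose (r + 2 * i))) • s (r + 2 * i + 2 * (k - i)))
        = (∑ i ∈ range (k + 1),
            ((r + 2 * i).choose r : ℚ) * E (2 * i) * ((r + 2 * k).choose (r + 2 * i)))
              • s (r + 2 * k) := by
      rw [Finset.sum_smul]
      exact Finset.sum_congr rfl fun i hi => by rw [hsum i hi]
    rw [this]
    have hco : (∑ i ∈ range (k + 1),
        ((r + 2 * i).choose r : ℚ) * E (2 * i) * ((r + 2 * k).choose (r + 2 * i)))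
        = ((r + 2 * k).choose r : ℚ) * (if k = 0 then 1 else 0) := by
      rw [← hE k, Finset.mul_sum]
      refine Finset.sum_congr rfl fun i hi => ?_
      simp only [mem_range] at hi
      have hik : i ≤ k := by omega
      have hch : (r + 2 * k).choose (r + 2 * i) * (r + 2 * i).choose r
          = (r + 2 * k).choose r * (2 * k).choose (2 * i) := by
        have := Nat.choose_mul (n := r + 2 * k) (k := r + 2 * i) (s := r)
          (by omega)
        simpa [show r + 2 * k - r = 2 * k by omega, show r + 2 * i - r = 2 * i by omega]
          using this
      have : ((r + 2 * k).choose (r + 2 * i) : ℚ) * ((r + 2 * i).choose r : ℚ)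
          = ((r + 2 * k).choose r : ℚ) * ((2 * k).choose (2 * i) : ℚ) := by
        exact_mod_cast congrArg (Nat.cast : ℕ → ℚ) hch
      calc ((r + 2 * i).choose r : ℚ) * E (2 * i) * ((r + 2 * k).choose (r + 2 * i))
          = ((r + 2 * k).choose (r + 2 * i) : ℚ) * ((r + 2 * i).choose r) * E (2 * i) := by ring
        _ = ((r + 2 * k).choose r : ℚ) * ((2 * k).choose (2 * i)) * E (2 * i) := by rw [this]
        _ = ((r + 2 * k).choose r : ℚ) * (((2 * k).choose (2 * i) : ℚ) * E (2 * i)) := by ring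
    rw [hco]
    split_ifs with h
    · subst h; simp
    · simp
  rw [Finset.sum_congr rfl coll]
  simp
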